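/- arXiv:2008.04777 — 2 statements merged into one kernel-verified Lean document; each statement's English description precedes it below -/
import Mathlib

section
/- Let P, Q, R, S be g×g integer matrices satisfying Qᵀ*P = Pᵀ*Q, R*Pᵀ = P*Rᵀ, and P*Sᵀ - R*Qᵀ = 1. Then for every vector n ∈ ℤ^g: n lies in the image of the linear map x ↦ P.mulVec x if and only if Qᵀ.mulVec n lies in the image of x ↦ Pᵀ.mulVec x. -/
open Matrix

theorem stmt2 (g : ℕ) (P Q R S : Matrix (Fin g) (Fin g) ℤ)
    (h1 : Qᵀ * P = Pᵀ * Q) (h2 : R * Pᵀ = P * Rᵀ) (h3 : P * Sᵀ - R * Qᵀ = 1)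
    (n : Fin g → ℤ) :
    (∃ m : Fin g → ℤ, P.mulVec m = n) ↔
    (∃ r : Fin g → ℤ, Pᵀ.mulVec r = Qᵀ.mulVec n) := by
  constructor
  · rintro ⟨m, rfl⟩
    exact ⟨Q.mulVec m, by rw [mulVec_mulVec, mulVec_mulVec, h1]⟩
  · rintro ⟨r, hr⟩
    refine ⟨Sᵀ.mulVec n - Rᵀ.mulVec r, ?_⟩
    have key : (P * Rᵀ).mulVec r = (R * Qᵀ).mulVec n := by
      rw [← h2, ← mulVec_mulVec, hr, mulVec_mulVec]
    calc P.mulVec (Sᵀ.mulVec n - Rᵀ.mulVec r)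
        = (P * Sᵀ).mulVec n - (P * Rᵀ).mulVec r := by
          rw [mulVec_sub, mulVec_mulVec, mulVec_mulVec]
      _ = (P * Sᵀ).mulVec n - (R * Qᵀ).mulVec n := by rw [key]
      _ = ((P * Sᵀ - R * Qᵀ)).mulVec n := by rw [sub_mulVec]
      _ = n := by rw [h3, one_mulVec]
end

section
/- Let P, Q, R, S be g×g integer matrices satisfying Qᵀ*P = Pᵀ*Q, R*Pᵀ = P*Rᵀ, and P*Sᵀ - R*Qᵀ = 1. Then the map ℤ^g → ℤ^g / Im(Pᵀ) sending n to the class of Qᵀ.mulVec n descends to a well-defined injective group homomorphism from ℤ^g / Im(P) to ℤ^g / Im(Pᵀ). -/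
open Matrix

theorem stmt3 (g : ℕ) (P Q R S : Matrix (Fin g) (Fin g) ℤ)
    (h1 : Qᵀ * P = Pᵀ * Q) (h2 : R * Pᵀ = P * Rᵀ) (h3 : P * Sᵀ - R * Qᵀ = 1) :
    ∃ φ : ((Fin g → ℤ) ⧸ LinearMap.range P.mulVecLin) →+
          ((Fin g → ℤ) ⧸ LinearMap.range Pᵀ.mulVecLin),
      Function.Injective φ ∧
      ∀ n : Fin g → ℤ,
        φ (Submodule.Quotient.mk n) = Submodule.Quotient.mk (Qᵀ.mulVec n) := by
  have hle : LinearMap.range P.mulVecLin ≤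
      (LinearMap.range Pᵀ.mulVecLin).comap Qᵀ.mulVecLin := by
    rintro _ ⟨m, rfl⟩
    refine ⟨Q.mulVec m, ?_⟩
    simp only [mulVecLin_apply, mulVec_mulVec, h1]
  set ψ := Submodule.mapQ (LinearMap.range P.mulVecLin)
      (LinearMap.range Pᵀ.mulVecLin) Qᵀ.mulVecLin hle with hψ
  refine ⟨ψ.toAddMonoidHom, ?_, fun n => rfl⟩
  rw [show (⇑ψ.toAddMonoidHom) = ⇑ψ from rfl]
  rw [← LinearMap.ker_eq_bot]
  rw [eq_bot_iff]
  rintro x hx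
  obtain ⟨n, rfl⟩ := Submodule.Quotient.mk_surjective _ x
  rw [LinearMap.mem_ker, hψ, Submodule.mapQ_apply, Submodule.Quotient.mk_eq_zero] at hx
  rw [Submodule.mem_bot, Submodule.Quotient.mk_eq_zero]
  obtain ⟨m, hm⟩ := hx
  simp only [mulVecLin_apply] at hm
  refine ⟨Sᵀ.mulVec n - Rᵀ.mulVec m, ?_⟩
  have key : P.mulVec (Sᵀ.mulVec n - Rᵀ.mulVec m) = n := by
    have h4 : (R * Pᵀ).mulVec m = (R * Qᵀ).mulVec n := by
      rw [← mulVec_mulVec, hm, mulVec_mulVec]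
    rw [mulVec_sub, mulVec_mulVec, mulVec_mulVec, ← h2, h4, ← sub_mulVec, h3,
      one_mulVec]
  simpa using key
end
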